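/- Let μ ∈ (0, 1/2] and let c be a real number with c_J < c < c_h, where c_J = −1 − 2√(μ(1−μ)) and c_h = −1 + 2μ. Then 0 ≤ −(1−2μ)/c < 1, so there is a unique ν₁ ∈ (0, π) with cos ν₁ = −(1−2μ)/c. The point (ν₁, 0) is a critical point of the function h(ν, p) = 2p² + 2(1−2μ)cos ν + c·cos²ν, and at this point ∂²h/∂ν² = 2(c² − (1−2μ)²)/c < 0, ∂²h/∂p² = 4 > 0, and ∂²h/∂ν∂p = 0; hence (ν₁, 0) is a nondegenerate saddle point of h. (This expresses that the hyperbolic orbit — the Lyapunov orbit — is a hyperbolic critical circle for every such μ and c.) -/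

import Mathlib

/-- The ν-part of the regularized Hamiltonian of the Euler problem:
Q_ν(ν, p) = 2p² + 2(1-2μ)cos ν + c·cos²ν. -/
noncomputable def Qnu (μ c ν p : ℝ) : ℝ :=
  2 * p ^ 2 + 2 * (1 - 2 * μ) * Real.cos ν + c * Real.cos ν ^ 2

lemma Qnu_nu_hasDerivAt (μ c : ℝ) (ν : ℝ) :
    HasDerivAt (fun ν => Qnu μ c ν 0)
      (-(2 * (1 - 2 * μ) * Real.sin ν) - 2 * c * Real.cos ν * Real.sin ν) ν := by
  have h1 := (Real.hasDerivAt_cos ν).const_mul (2 * (1 - 2 * μ))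
  have h2 := (((Real.hasDerivAt_cos ν).pow 2).const_mul c)
  have h := (h1.add h2).const_add (2 * (0:ℝ) ^ 2)
  unfold Qnu
  convert h using 1
  · rfl
  · rfl
  · ext x; simp only [Pi.add_apply, Pi.pow_apply, Pi.neg_apply, Pi.sub_apply, Pi.mul_apply]; ring
  · ring

lemma Qnu_nu_deriv (μ c : ℝ) :
    deriv (fun ν => Qnu μ c ν 0) =
      fun ν => -(2 * (1 - 2 * μ) * Real.sin ν) - 2 * c * Real.cos ν * Real.sin ν := by
  funext ν; exact (Qnu_nu_hasDerivAt μ c ν).deriv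

lemma Qnu_nu_deriv' (μ c ν : ℝ) :
    deriv (fun ν => Qnu μ c ν 0) ν =
      -(2 * (1 - 2 * μ) * Real.sin ν) - 2 * c * Real.cos ν * Real.sin ν :=
  (Qnu_nu_hasDerivAt μ c ν).deriv

lemma Qnu_nu_deriv2 (μ c ν : ℝ) :
    deriv (deriv (fun ν => Qnu μ c ν 0)) ν =
      -(2 * (1 - 2 * μ) * Real.cos ν) - 2 * c * (Real.cos ν ^ 2 - Real.sin ν ^ 2) := by
  rw [Qnu_nu_deriv]
  have h1 := (Real.hasDerivAt_sin ν).const_mul (2 * (1 - 2 * μ))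
  have h2 := ((Real.hasDerivAt_cos ν).mul (Real.hasDerivAt_sin ν)).const_mul (2 * c)
  have h := (h1.neg.sub h2)
  have h' : HasDerivAt
      (fun ν => -(2 * (1 - 2 * μ) * Real.sin ν) - 2 * c * Real.cos ν * Real.sin ν)
      (-(2 * (1 - 2 * μ) * Real.cos ν) - 2 * c * (Real.cos ν ^ 2 - Real.sin ν ^ 2)) ν := by
    convert h using 1
    · rfl
    · rfl
    · ext x; simp only [Pi.add_apply, Pi.pow_apply, Pi.neg_apply, Pi.sub_apply, Pi.mul_apply]; ring
    · ring
  exact h'.deriv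

lemma Qnu_p_hasDerivAt (μ c ν p : ℝ) :
    HasDerivAt (fun p => Qnu μ c ν p) (4 * p) p := by
  have h : HasDerivAt (fun p : ℝ => p ^ 2) (2 * p) p := by
    simpa using hasDerivAt_pow 2 p
  have h' := (h.const_mul (2:ℝ)).add_const
    (2 * (1 - 2 * μ) * Real.cos ν + c * Real.cos ν ^ 2)
  unfold Qnu
  convert h' using 1
  · rfl
  · rfl
  · funext x; ring
  · ring

lemma Qnu_p_deriv (μ c ν : ℝ) :
    deriv (fun p => Qnu μ c ν p) = fun p => 4 * p := by
  funext p; exact (Qnu_p_hasDerivAt μ c ν p).deriv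

/-- For μ ∈ (0, 1/2] and c_J < c < c_h (c_J = -1 - 2√(μ(1-μ)), c_h = -1 + 2μ):
0 ≤ -(1-2μ)/c < 1, there is a unique ν₁ ∈ (0, π) with cos ν₁ = -(1-2μ)/c, and at
(ν₁, 0) the function Q_ν has a critical point with ∂²/∂ν² = 2(c²-(1-2μ)²)/c < 0,
∂²/∂p² = 4 > 0 and vanishing mixed partial; hence (ν₁, 0) is a nondegenerate saddle
point (the hyperbolic/Lyapunov orbit is a hyperbolic critical circle). -/
theorem lyapunov_orbit_hyperbolic (μ c : ℝ) (hμ0 : 0 < μ) (hμ1 : μ ≤ 1 / 2)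
    (hc1 : -1 - 2 * Real.sqrt (μ * (1 - μ)) < c) (hc2 : c < -1 + 2 * μ) :
    (0 ≤ -(1 - 2 * μ) / c ∧ -(1 - 2 * μ) / c < 1) ∧
    (∃! ν₁ : ℝ, ν₁ ∈ Set.Ioo 0 Real.pi ∧ Real.cos ν₁ = -(1 - 2 * μ) / c) ∧
    ∀ ν₁ : ℝ, ν₁ ∈ Set.Ioo 0 Real.pi → Real.cos ν₁ = -(1 - 2 * μ) / c →
      deriv (fun ν => Qnu μ c ν 0) ν₁ = 0 ∧
      deriv (fun p => Qnu μ c ν₁ p) 0 = 0 ∧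
      deriv (deriv (fun ν => Qnu μ c ν 0)) ν₁ = 2 * (c ^ 2 - (1 - 2 * μ) ^ 2) / c ∧
      2 * (c ^ 2 - (1 - 2 * μ) ^ 2) / c < 0 ∧
      deriv (deriv (fun p => Qnu μ c ν₁ p)) 0 = 4 ∧
      deriv (fun ν => deriv (fun p => Qnu μ c ν p) 0) ν₁ = 0 ∧
      deriv (deriv (fun ν => Qnu μ c ν 0)) ν₁ *
          deriv (deriv (fun p => Qnu μ c ν₁ p)) 0 -
        (deriv (fun ν => deriv (fun p => Qnu μ c ν p) 0) ν₁) ^ 2 < 0 := by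
  have ha : 0 ≤ 1 - 2 * μ := by linarith
  have hc0 : c < 0 := by linarith
  set x : ℝ := -(1 - 2 * μ) / c with hxdef
  have hx0 : 0 ≤ x := by
    rw [hxdef, div_nonneg_iff]
    right; constructor <;> linarith
  have hxc : x * c = -(1 - 2 * μ) := div_mul_cancel₀ _ hc0.ne
  have hx1 : x < 1 := by nlinarith
  have hxm1 : -1 ≤ x := by linarith
  refine ⟨⟨hx0, hx1⟩, ?_, ?_⟩
  · refine ⟨Real.arccos x, ⟨⟨?_, ?_⟩, Real.cos_arccos hxm1 hx1.le⟩, ?_⟩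
    · exact Real.arccos_pos.mpr hx1
    · refine lt_of_le_of_ne (Real.arccos_le_pi x) fun h => ?_
      have := Real.arccos_eq_pi.mp h
      linarith
    · rintro y ⟨⟨hy0, hyπ⟩, hcy⟩
      rw [← Real.arccos_cos hy0.le hyπ.le, hcy]
  · rintro ν₁ ⟨hν0, hνπ⟩ hcos
    have hsin : 0 < Real.sin ν₁ := Real.sin_pos_of_pos_of_lt_pi hν0 hνπ
    have hnum : 0 < c ^ 2 - (1 - 2 * μ) ^ 2 := by nlinarith
    have hsign : 2 * (c ^ 2 - (1 - 2 * μ) ^ 2) / c < 0 :=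
      div_neg_of_pos_of_neg (by linarith) hc0
    have hd1 : deriv (fun ν => Qnu μ c ν 0) ν₁ = 0 := by
      rw [Qnu_nu_deriv', hcos, hxdef]
      field_simp [hc0.ne]
      ring
    have hd2 : deriv (deriv (fun ν => Qnu μ c ν 0)) ν₁ =
        2 * (c ^ 2 - (1 - 2 * μ) ^ 2) / c := by
      have hs2 : Real.sin ν₁ ^ 2 = 1 - x ^ 2 := by
        have := Real.sin_sq_add_cos_sq ν₁
        rw [hcos] at this; linarith
      rw [Qnu_nu_deriv2, hcos, hs2, hxdef]
      field_simp [hc0.ne]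
      ring
    have hmix : (fun ν => deriv (fun p => Qnu μ c ν p) 0) = fun _ => 0 := by
      funext ν; rw [Qnu_p_deriv]; simp
    have hp2 : deriv (deriv (fun p => Qnu μ c ν₁ p)) 0 = 4 := by
      rw [Qnu_p_deriv]
      have h4 : HasDerivAt (fun p : ℝ => 4 * p) 4 0 := by
        simpa using (hasDerivAt_id (0:ℝ)).const_mul (4:ℝ)
      exact h4.deriv
    refine ⟨hd1, ?_, hd2, hsign, hp2, ?_, ?_⟩
    · rw [Qnu_p_deriv]; simp
    · rw [hmix]; simp
    · rw [hd2, hp2, hmix]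
      rw [deriv_const]
      nlinarith
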